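/- Let α ∈ (0,1), λ = (1−α)/(2α), and suppose there exists a graph H on k vertices with spectral radius exactly λ. Then for every d, N_α(d) ≥ ⌊k(d−1)/(k−1)⌋, i.e., there exist ⌊k(d−1)/(k−1)⌋ unit vectors in R^d with pairwise inner products ±α. -/

import Mathlib

open Matrix SimpleGraph Finset
open scoped Classical RealInnerProductSpace

noncomputable section

/-- The adjacency matrix of a graph is Hermitian (real symmetric). -/
lemma adjHerm {V : Type} [Fintype V] [DecidableEq V] (G : SimpleGraph V) :
    (G.adjMatrix ℝ).IsHermitian := by
  have h := G.isSymm_adjMatrix (α := ℝ)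
  simpa [Matrix.IsHermitian, Matrix.conjTranspose_eq_transpose_of_trivial] using h

/-- The spectral radius (largest adjacency eigenvalue) `λ₁(G)` of a graph. -/
def specRad {V : Type} [Fintype V] [DecidableEq V] (G : SimpleGraph V) : ℝ :=
  ⨆ i, (adjHerm G).eigenvalues i

/-- The `j`-th largest adjacency eigenvalue of `G` (1-indexed, with multiplicity):
entry `card V - j` of the increasingly sorted list of eigenvalues. -/
def nthEig {V : Type} [Fintype V] [DecidableEq V] (G : SimpleGraph V) (j : ℕ) : ℝ :=
  (Multiset.sort (Finset.univ.val.map (adjHerm G).eigenvalues) (· ≤ ·)).getD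
    (Fintype.card V - j) 0

/-- The multiplicity of `μ` as an adjacency eigenvalue of `G`. -/
def eigMult {V : Type} [Fintype V] [DecidableEq V] (G : SimpleGraph V) (μ : ℝ) : ℕ :=
  Module.finrank ℝ (Module.End.eigenspace (Matrix.toLin' (G.adjMatrix ℝ)) μ)

/-- The ball of radius `r` around `v`: all vertices at graph distance at most `r` from `v`. -/
def ball {V : Type} (G : SimpleGraph V) (v : V) (r : ℕ) : Set V := {u | G.dist v u ≤ r}

/-- A positive semidefinite real matrix of rank at most `d` is the Gram matrix
of a family of vectors in `ℝ^d`. -/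
lemma gramOfPSD {ι : Type} [Fintype ι] [DecidableEq ι] (d : ℕ) (M : Matrix ι ι ℝ)
    (hM : M.PosSemidef) (hr : M.rank ≤ d) :
    ∃ w : ι → EuclideanSpace ℝ (Fin d), ∀ i j, ⟪w i, w j⟫ = M i j := by
  classical
  have hH := hM.1
  set μ := hH.eigenvalues with hμ
  set U := (hH.eigenvectorUnitary : Matrix ι ι ℝ) with hU
  have hcard : Fintype.card {t // μ t ≠ 0} ≤ Fintype.card (Fin d) := by
    rw [← hH.rank_eq_card_non_zero_eigs] at *
    simpa using hr
  obtain ⟨f⟩ := Function.Embedding.nonempty_of_card_le hcard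
  refine ⟨fun i => ∑ t : {t // μ t ≠ 0},
      (Real.sqrt (μ t) * U i t) • EuclideanSpace.single (f t) (1:ℝ), fun i j => ?_⟩
  have hME : ∀ i j, M i j = ∑ t, U i t * μ t * U j t := by
    intro i j
    conv_lhs => rw [hH.spectral_theorem]
    simp [Matrix.mul_apply, Matrix.diagonal_apply, hU, Finset.sum_ite_eq,
      mul_comm, mul_assoc, mul_left_comm]
    rfl
  rw [hME]
  rw [inner_sum]
  simp_rw [sum_inner, real_inner_smul_left, real_inner_smul_right,
    EuclideanSpace.inner_single_left, EuclideanSpace.single_apply, RingHom.map_one, one_mul,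
    mul_ite, mul_one, mul_zero, f.injective.eq_iff]
  rw [Finset.sum_comm]
  have h1 : ∀ t : {t // μ t ≠ 0}, ∑ s : {t // μ t ≠ 0},
      (if t = s then Real.sqrt (μ t) * U i t * (Real.sqrt (μ s) * U j s) else 0)
      = U i t * μ t * U j t := by
    intro t
    rw [Finset.sum_ite_eq (Finset.univ) t
      (fun s => Real.sqrt (μ t) * U i t * (Real.sqrt (μ s) * U j s))]
    simp only [Finset.mem_univ, if_true]
    ring_nf
    rw [Real.sq_sqrt (hM.eigenvalues_nonneg t)]
    ring
  rw [Finset.sum_congr rfl (fun t _ => h1 t)]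
  rw [← Finset.sum_filter_of_ne (s := Finset.univ) (p := fun t => μ t ≠ 0)
    (f := fun t => U i t * μ t * U j t)
    (by intro x _ hx h0; exact hx (by simp only [h0, mul_zero, zero_mul]))]
  exact (Finset.sum_subtype (Finset.univ.filter (fun x => μ x ≠ 0))
    (fun x => by simp) (fun t => U i t * μ t * U j t)).symm

/-- Rayleigh quotient bound for a real symmetric matrix. -/
lemma rayleigh {ι : Type} [Fintype ι] [DecidableEq ι] (B : Matrix ι ι ℝ)
    (hB : B.IsHermitian) (l : ℝ) (hl : ∀ t, hB.eigenvalues t ≤ l) (x : ι → ℝ) :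
    x ⬝ᵥ (B *ᵥ x) ≤ l * (x ⬝ᵥ x) := by
  classical
  set μ := hB.eigenvalues
  set U := (hB.eigenvectorUnitary : Matrix ι ι ℝ) with hU
  have hUU : U * star U = 1 := (Matrix.mem_unitaryGroup_iff).mp hB.eigenvectorUnitary.2
  have hsUT : (star U)ᵀ = U := by
    rw [Matrix.star_eq_conjTranspose, Matrix.conjTranspose_eq_transpose_of_trivial,
      Matrix.transpose_transpose]
  have hyv : star U *ᵥ x = x ᵥ* U := by conv_rhs => rw [← hsUT, Matrix.vecMul_transpose]
  set y := star U *ᵥ x with hy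
  have hyy : y ⬝ᵥ y = x ⬝ᵥ x := by
    rw [hy, Matrix.dotProduct_mulVec, ← hy, hyv, Matrix.vecMul_vecMul, hUU, Matrix.vecMul_one]
  have hdc : Matrix.diagonal ((RCLike.ofReal : ℝ → ℝ) ∘ μ) = Matrix.diagonal μ := by
    ext i j; simp [Matrix.diagonal_apply]
  have hBx : x ⬝ᵥ (B *ᵥ x) = y ⬝ᵥ ((Matrix.diagonal μ) *ᵥ y) := by
    conv_lhs => rw [hB.spectral_theorem]
    simp only [Unitary.conjStarAlgAut_apply, Unitary.coe_star]
    rw [← Matrix.mulVec_mulVec, ← Matrix.mulVec_mulVec, Matrix.dotProduct_mulVec, hdc,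
      ← hU, ← hy, hyv]
  have hdiag : y ⬝ᵥ ((Matrix.diagonal μ) *ᵥ y) = ∑ t, μ t * (y t)^2 := by
    simp only [Matrix.mulVec_diagonal, dotProduct, pow_two]
    congr 1; ext t; ring
  rw [hBx, hdiag, ← hyy]
  have : l * (y ⬝ᵥ y) = ∑ t, l * (y t)^2 := by
    simp [dotProduct, Finset.mul_sum, pow_two]
  rw [this]
  exact Finset.sum_le_sum fun t _ => mul_le_mul_of_nonneg_right (hl t) (sq_nonneg _)

set_option maxHeartbeats 1600000 in
theorem stmt8 (α : ℝ) (hα : 0 < α) (hα1 : α < 1) (l : ℝ) (hl : l = (1 - α) / (2 * α))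
    (k : ℕ) (H : SimpleGraph (Fin k)) (hH : specRad H = l) (d : ℕ) (hd : 1 ≤ d) :
    ∃ v : Fin (k * (d - 1) / (k - 1)) → EuclideanSpace ℝ (Fin d), (∀ i, ‖v i‖ = 1) ∧
      ∀ i j, i ≠ j → ⟪v i, v j⟫ = α ∨ ⟪v i, v j⟫ = -α := by
  classical
  have hlpos : 0 < l := by
    rw [hl]
    apply div_pos <;> linarith
  have h2al : 2 * α * l = 1 - α := by
    rw [hl]; field_simp
  set A := H.adjMatrix ℝ with hA
  have hAH : A.IsHermitian := adjHerm H
  -- k ≥ 2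
  have hk2 : 2 ≤ k := by
    by_contra hk
    push_neg at hk
    interval_cases k
    · have : specRad H = 0 := by
        rw [specRad, Real.iSup_of_isEmpty]
      rw [hH] at this; exact absurd this (ne_of_gt hlpos)
    · have hA0 : A = 0 := by
        ext i j
        have : i = j := Subsingleton.elim i j
        subst this
        simp [hA]
      have hev : ∀ i, (adjHerm H).eigenvalues i = 0 := by
        intro i
        rw [(adjHerm H).eigenvalues_eq]
        simp only [show H.adjMatrix ℝ = 0 from hA0, Matrix.zero_mulVec,
          dotProduct_zero, map_zero]
      have : specRad H = 0 := by
        rw [specRad]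
        simp [hev]
      rw [hH] at this; exact absurd this (ne_of_gt hlpos)
  have hk0 : 0 < k := by omega
  haveI : Nonempty (Fin k) := ⟨⟨0, hk0⟩⟩
  -- eigenvalue facts
  have hle : ∀ i, hAH.eigenvalues i ≤ l := by
    intro i
    rw [← hH, specRad]
    exact le_ciSup (Set.Finite.bddAbove (Set.finite_range _)) i
  obtain ⟨i₀, hi₀⟩ : ∃ i, (adjHerm H).eigenvalues i = specRad H :=
    exists_eq_ciSup_of_finite
  set φ : Fin k → ℝ := ⇑(hAH.eigenvectorBasis i₀) with hφ
  have hφeig : A *ᵥ φ = l • φ := by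
    have := hAH.mulVec_eigenvectorBasis i₀
    rw [hi₀, hH] at this
    exact this
  have hφne : φ ≠ 0 := by
    intro h0
    have := hAH.eigenvectorBasis.orthonormal.ne_zero i₀
    apply this
    ext a
    exact congrFun h0 a
  obtain ⟨a₀, ha₀⟩ : ∃ a, φ a ≠ 0 := Function.ne_iff.mp hφne
  -- arithmetic setup
  set m := k - 1 with hm
  have hm1 : 1 ≤ m := by omega
  have hkm : k = m + 1 := by omega
  set q := (d-1) / m with hq
  set r := (d-1) % m with hr
  have hrm : r < m := Nat.mod_lt _ (by omega)
  have hd1 : m * q + r = d - 1 := Nat.div_add_mod _ _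
  set n := k * (d - 1) / (k - 1) with hn
  have hnval : n = q * k + r := by
    have key : k * (d-1) = m * (q * k + r) + r := by
      rw [← hd1]; rw [hkm]; ring
    rw [hn, ← hm, key, Nat.mul_add_div (by omega)]
    rw [Nat.div_eq_of_lt hrm]
    omega
  have hnd : n = (d - 1) + q := by
    have hqk : q * k = m * q + q := by rw [hkm]; ring
    omega
  -- the big matrix
  set ι := (Fin q × Fin k) ⊕ Fin r with hι
  have hcard : Fintype.card ι = n := by
    simp [hι, hnval, mul_comm]
  set B : Matrix ι ι ℝ := Matrix.of (fun i j =>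
    match i, j with
    | Sum.inl (p, a), Sum.inl (p', b) => if p = p' then A a b else 0
    | _, _ => 0) with hB
  set M : Matrix ι ι ℝ := (1-α) • (1 : Matrix ι ι ℝ)
    + α • (Matrix.of fun _ _ => (1:ℝ)) - (2*α) • B with hM
  -- entries of B
  have hBsymm : B.IsHermitian := by
    rw [Matrix.IsHermitian, Matrix.conjTranspose_eq_transpose_of_trivial]
    ext i j
    rcases i with ⟨p, a⟩ | c <;> rcases j with ⟨p', b⟩ | c' <;>
      simp [hB, Matrix.transpose_apply, eq_comm]
    rcases eq_or_ne p p' with h | h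
    · subst h; simp [hA, SimpleGraph.adjMatrix_apply, adj_comm]
    · simp [h, Ne.symm h]
  have hB01 : ∀ i j : ι, B i j = 0 ∨ B i j = 1 := by
    intro i j
    rcases i with ⟨p, a⟩ | c <;> rcases j with ⟨p', b⟩ | c' <;> simp [hB]
    rcases eq_or_ne p p' with h | h
    · subst h
      simp only [if_true]
      by_cases hab : H.Adj a b <;> simp [hA, hab]
    · simp [h]
  have hBdiag : ∀ i : ι, B i i = 0 := by
    intro i
    rcases i with ⟨p, a⟩ | c <;> simp [hB, hA]
  -- mulVec of B
  have hBmv : ∀ (x : ι → ℝ) (p : Fin q) (a : Fin k),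
      (B *ᵥ x) (Sum.inl (p, a)) = (A *ᵥ (fun b => x (Sum.inl (p, b)))) a := by
    intro x p a
    rw [Matrix.mulVec, dotProduct, Fintype.sum_sum_type]
    simp only [hB, Matrix.of_apply]
    rw [Fintype.sum_prod_type]
    simp only [ite_mul, zero_mul]
    rw [Finset.sum_comm]
    simp [Finset.sum_ite_eq' Finset.univ p, Matrix.mulVec, dotProduct]
  have hBmr : ∀ (x : ι → ℝ) (c : Fin r), (B *ᵥ x) (Sum.inr c) = 0 := by
    intro x c
    rw [Matrix.mulVec, dotProduct]
    apply Finset.sum_eq_zero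
    intro j _
    rcases j with ⟨p', b⟩ | c' <;> simp [hB]
  -- entry description of M
  have hMapp : ∀ i j : ι, M i j = (1-α) * (if i = j then 1 else 0) + α - 2*α * B i j := by
    intro i j
    simp [hM, Matrix.sub_apply, Matrix.add_apply, Matrix.smul_apply, Matrix.one_apply,
      smul_eq_mul]
  have hBs : ∀ i j : ι, B i j = B j i := by
    intro i j
    conv_lhs => rw [← hBsymm]
    simp [Matrix.conjTranspose_apply]
  have hMdiag : ∀ i : ι, M i i = 1 := by
    intro i
    rw [hMapp, hBdiag]
    simp
  have hMoff : ∀ i j : ι, i ≠ j → M i j = α ∨ M i j = -α := by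
    intro i j hij
    rw [hMapp, if_neg hij]
    rcases hB01 i j with h | h <;> rw [h]
    · left; ring
    · right; ring
  -- Hermitian
  have hMH : M.IsHermitian := by
    rw [Matrix.IsHermitian, Matrix.conjTranspose_eq_transpose_of_trivial]
    ext i j
    rw [Matrix.transpose_apply, hMapp i j, hMapp j i, hBs j i]
    simp [eq_comm]
  -- quadratic form
  have hquad : ∀ x : ι → ℝ, x ⬝ᵥ (M *ᵥ x) =
      (1-α) * (x ⬝ᵥ x) + α * (∑ i, x i)^2 - 2*α * (x ⬝ᵥ (B *ᵥ x)) := by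
    intro x
    have hJ : x ⬝ᵥ ((Matrix.of fun _ _ => (1:ℝ)) *ᵥ x) = (∑ i, x i)^2 := by
      simp only [Matrix.mulVec, dotProduct, Matrix.of_apply, one_mul, pow_two]
      rw [← Finset.sum_mul]
    rw [hM, Matrix.sub_mulVec, Matrix.add_mulVec, dotProduct_sub, dotProduct_add,
      Matrix.smul_mulVec, Matrix.smul_mulVec, Matrix.smul_mulVec,
      dotProduct_smul, dotProduct_smul, dotProduct_smul,
      Matrix.one_mulVec, hJ]
    simp [smul_eq_mul]
  -- block decomposition of B's quadratic form
  have hBquad : ∀ x : ι → ℝ, x ⬝ᵥ (B *ᵥ x) =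
      ∑ p : Fin q, (fun b => x (Sum.inl (p, b))) ⬝ᵥ (A *ᵥ (fun b => x (Sum.inl (p, b)))) := by
    intro x
    rw [dotProduct, Fintype.sum_sum_type]
    rw [Fintype.sum_prod_type]
    simp_rw [hBmv, hBmr, mul_zero]
    simp [dotProduct]
  -- positive semidefinite
  have hMpsd : M.PosSemidef := by
    refine Matrix.PosSemidef.of_dotProduct_mulVec_nonneg hMH (fun x => ?_)
    rw [star_trivial, hquad x]
    have hT : x ⬝ᵥ (B *ᵥ x) ≤ l * (x ⬝ᵥ x) := by
      rw [hBquad]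
      have h1 : ∀ p : Fin q, (fun b => x (Sum.inl (p, b))) ⬝ᵥ (A *ᵥ (fun b => x (Sum.inl (p, b))))
          ≤ l * ((fun b => x (Sum.inl (p, b))) ⬝ᵥ (fun b => x (Sum.inl (p, b)))) :=
        fun p => rayleigh A hAH l hle _
      have h2 : ∑ p : Fin q, l * ((fun b => x (Sum.inl (p, b))) ⬝ᵥ (fun b => x (Sum.inl (p, b))))
          ≤ l * (x ⬝ᵥ x) := by
        rw [← Finset.mul_sum]
        apply mul_le_mul_of_nonneg_left _ hlpos.le
        have hxx : x ⬝ᵥ x = (∑ p : Fin q, ∑ a : Fin k,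
            x (Sum.inl (p,a)) * x (Sum.inl (p,a))) + ∑ c, x (Sum.inr c) * x (Sum.inr c) := by
          rw [dotProduct, Fintype.sum_sum_type, Fintype.sum_prod_type]
        rw [hxx]
        simp only [dotProduct]
        exact le_add_of_nonneg_right (Finset.sum_nonneg fun c _ => mul_self_nonneg _)
      exact le_trans (Finset.sum_le_sum fun p _ => h1 p) h2
    have h3 : 2*α*(x ⬝ᵥ (B *ᵥ x)) ≤ 2*α*(l*(x ⬝ᵥ x)) :=
      mul_le_mul_of_nonneg_left hT (by linarith)
    have h4 : 2*α*(l*(x ⬝ᵥ x)) = (1-α) * (x ⬝ᵥ x) := by rw [← h2al]; ring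
    have h5 : 0 ≤ α * (∑ i, x i)^2 := by positivity
    linarith
  -- rank bound
  have hrn : M.rank + Module.finrank ℝ (LinearMap.ker M.mulVecLin) = n := by
    have h := LinearMap.finrank_range_add_finrank_ker M.mulVecLin
    rwa [Module.finrank_pi, hcard] at h
  have hrank : M.rank ≤ d := by
    rcases Nat.eq_zero_or_pos q with hq0 | hqpos
    · have h := M.rank_le_card_width
      omega
    · set ψ : Fin q → ι → ℝ := fun p => Sum.elim
        (fun pa => if pa.1 = p then φ pa.2 else 0) (fun _ => 0) with hψ
      have hψinl : ∀ p p₁ a, ψ p (Sum.inl (p₁, a)) = if p₁ = p then φ a else 0 := by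
        intro p p₁ a; simp [hψ]
      have hBψ : ∀ p, B *ᵥ ψ p = l • ψ p := by
        intro p
        ext i
        rcases i with ⟨p₁, a⟩ | c
        · rw [hBmv]
          rcases eq_or_ne p₁ p with h | h
          · subst h
            have hfun : (fun b => ψ p₁ (Sum.inl (p₁, b))) = φ := by
              ext b; rw [hψinl, if_pos rfl]
            rw [hfun, hφeig]
            simp [hψinl]
          · have hfun : (fun b => ψ p (Sum.inl (p₁, b))) = 0 := by
              ext b; rw [hψinl, if_neg h]; rfl
            rw [hfun, Matrix.mulVec_zero]
            simp [hψinl, h]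
        · rw [hBmr]
          simp [hψ]
      have hsum : ∀ p, ∑ i, ψ p i = ∑ a, φ a := by
        intro p
        rw [Fintype.sum_sum_type, Fintype.sum_prod_type]
        simp only [hψinl]
        simp [hψ, Finset.sum_ite_eq']
      have hJz : ∀ p p' : Fin q, ((Matrix.of fun _ _ => (1:ℝ)) : Matrix ι ι ℝ) *ᵥ (ψ p - ψ p') = 0 := by
        intro p p'
        ext i
        simp only [Matrix.mulVec, dotProduct, Matrix.of_apply, one_mul, Pi.sub_apply,
          Pi.zero_apply, Finset.sum_sub_distrib]
        rw [hsum, hsum, sub_self]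
      have hMker : ∀ p p' : Fin q, M *ᵥ (ψ p - ψ p') = 0 := by
        intro p p'
        have hBz : B *ᵥ (ψ p - ψ p') = l • (ψ p - ψ p') := by
          rw [Matrix.mulVec_sub, hBψ, hBψ, smul_sub]
        rw [hM, Matrix.sub_mulVec, Matrix.add_mulVec, Matrix.smul_mulVec,
          Matrix.smul_mulVec, Matrix.smul_mulVec, Matrix.one_mulVec, hJz, hBz,
          smul_zero]
        ext i
        simp only [Pi.add_apply, Pi.sub_apply, Pi.smul_apply, Pi.zero_apply, smul_eq_mul]
        rw [← h2al]
        ring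
      set δ : Fin (q-1) → (ι → ℝ) :=
        fun j => ψ ⟨j.val+1, by omega⟩ - ψ ⟨0, hqpos⟩ with hδ
      have hδker : ∀ j, δ j ∈ LinearMap.ker M.mulVecLin := by
        intro j
        rw [LinearMap.mem_ker, Matrix.mulVecLin_apply, hδ]
        exact hMker _ _
      have hδind : LinearIndependent ℝ δ := by
        rw [Fintype.linearIndependent_iff]
        intro c hc j₀
        have hev := congrFun hc (Sum.inl (⟨j₀.val+1, by omega⟩, a₀))
        rw [Finset.sum_apply] at hev
        have hterm : ∀ j : Fin (q-1),
            (c j • δ j) (Sum.inl (⟨j₀.val+1, by omega⟩, a₀))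
            = if j = j₀ then c j * φ a₀ else 0 := by
          intro j
          rw [Pi.smul_apply, hδ]
          simp only [Pi.sub_apply, hψinl, smul_eq_mul]
          rcases eq_or_ne j j₀ with h | h
          · subst h
            have h2 : (⟨j.val+1, by omega⟩ : Fin q) ≠ ⟨0, hqpos⟩ := by
              simp [Fin.ext_iff]
            rw [if_neg h2]
            simp
          · have h1 : (⟨j₀.val+1, by omega⟩ : Fin q) ≠ (⟨j.val+1, by omega⟩ : Fin q) := by
              simp only [ne_eq, Fin.mk.injEq]
              intro hh
              exact h (Fin.ext (by omega)).symm
            have h2 : (⟨j₀.val+1, by omega⟩ : Fin q) ≠ ⟨0, hqpos⟩ := by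
              simp [Fin.ext_iff]
            rw [if_neg h1, if_neg h2, if_neg h]
            ring
        rw [Finset.sum_congr rfl (fun j _ => hterm j), Finset.sum_ite_eq' Finset.univ j₀,
          if_pos (Finset.mem_univ j₀), Pi.zero_apply] at hev
        exact (mul_eq_zero.mp hev).resolve_right ha₀
      have hspan : Module.finrank ℝ ↥(Submodule.span ℝ (Set.range δ))
          ≤ Module.finrank ℝ ↥(LinearMap.ker M.mulVecLin) :=
        Submodule.finrank_mono (Submodule.span_le.mpr (Set.range_subset_iff.mpr hδker))
      rw [finrank_span_eq_card hδind, Fintype.card_fin] at hspan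
      omega
  -- final assembly
  obtain ⟨w, hw⟩ := gramOfPSD d M hMpsd hrank
  have e : Fin n ≃ ι := Fintype.equivOfCardEq (by rw [hcard, Fintype.card_fin])
  refine ⟨fun i => w (e i), ?_, ?_⟩
  · intro i
    have h1 : ⟪w (e i), w (e i)⟫ = 1 := by rw [hw]; exact hMdiag _
    have h2 : ‖w (e i)‖ * ‖w (e i)‖ = 1 := by
      rw [← real_inner_self_eq_norm_mul_norm]; exact h1
    nlinarith [norm_nonneg (w (e i))]
  · intro i j hij
    have hne : e i ≠ e j := fun h => hij (e.injective h)
    rw [hw]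
    exact hMoff _ _ hne

end
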